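/- Let C be a triangulated category with a weight structure w, and suppose C is closed under small coproducts. Then the class C_{w∉[m,n]} of objects without weights m,...,n is closed under retracts: if M is a retract of N and N is without weights m,...,n, then so is M. -/

import Mathlib

open CategoryTheory CategoryTheory.Limits CategoryTheory.Pretriangulated Opposite

universe v u

variable (C : Type u) [Category.{v} C] [Preadditive C] [HasZeroObject C]
  [HasShift C ℤ] [∀ n : ℤ, (shiftFunctor C n).Additive] [Pretriangulated C]

/-- A weight structure on the triangulated category `C`. -/
structure WeightStructure where
  /-- the class `C_{w ≤ n}` -/
  le : ℤ → Set C
  /-- the class `C_{w ≥ n}` -/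
  ge : ℤ → Set C
  le_iso_closed : ∀ (n : ℤ) (X Y : C), (X ≅ Y) → X ∈ le n → Y ∈ le n
  ge_iso_closed : ∀ (n : ℤ) (X Y : C), (X ≅ Y) → X ∈ ge n → Y ∈ ge n
  le_retract : ∀ (n : ℤ) (X Y : C) (a : X ⟶ Y) (b : Y ⟶ X),
    a ≫ b = 𝟙 X → Y ∈ le n → X ∈ le n
  ge_retract : ∀ (n : ℤ) (X Y : C) (a : X ⟶ Y) (b : Y ⟶ X),
    a ≫ b = 𝟙 X → Y ∈ ge n → X ∈ ge n
  le_shift : ∀ (n k : ℤ) (X : C), X ∈ le n → X⟦k⟧ ∈ le (n + k)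
  ge_shift : ∀ (n k : ℤ) (X : C), X ∈ ge n → X⟦k⟧ ∈ ge (n + k)
  le_mono : ∀ n : ℤ, le n ⊆ le (n + 1)
  ge_anti : ∀ n : ℤ, ge (n + 1) ⊆ ge n
  orth : ∀ (n : ℤ) (X Y : C), X ∈ le n → Y ∈ ge (n + 1) → ∀ f : X ⟶ Y, f = 0
  decomp : ∀ (X : C) (k : ℤ), ∃ (A B : C) (x : A ⟶ X) (y : X ⟶ B) (δ : B ⟶ A⟦(1 : ℤ)⟧),
    (Triangle.mk x y δ ∈ distTriang C) ∧ A ∈ le k ∧ B ∈ ge (k + 1)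

variable {C}

/-- `(A, B, x, y)` is a `k`-weight decomposition of `X`. -/
def WeightStructure.IsWeightDecomp (w : WeightStructure C) (k : ℤ) {X : C} (A B : C)
    (x : A ⟶ X) (y : X ⟶ B) : Prop :=
  (∃ δ : B ⟶ A⟦(1 : ℤ)⟧, Triangle.mk x y δ ∈ distTriang C) ∧ A ∈ w.le k ∧ B ∈ w.ge (k + 1)

/-- `g : M ⟶ N` kills weights `m, …, n`. -/
def WeightStructure.KillsWeights (w : WeightStructure C) (m n : ℤ) {M N : C}
    (g : M ⟶ N) : Prop :=
  ∃ (A A' B B' : C) (x : A ⟶ M) (x' : M ⟶ A') (y' : B ⟶ N) (y : N ⟶ B'),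
    w.IsWeightDecomp n A A' x x' ∧ w.IsWeightDecomp (m - 1) B B' y' y ∧
      x ≫ g ≫ y = 0

/-- The class of objects of `C` without weights `m, …, n`. -/
def WeightStructure.without (w : WeightStructure C) (m n : ℤ) : Set C :=
  {M : C | w.KillsWeights m n (𝟙 M)}



/-- The class of objects without weights `m, …, n` is closed under retracts. -/
theorem stmt16 [HasCoproducts.{v} C] (w : WeightStructure C) (m n : ℤ)
    (hmn : m ≤ n) {M N : C} (a : M ⟶ N) (b : N ⟶ M) (hab : a ≫ b = 𝟙 M)
    (hN : N ∈ w.without m n) : M ∈ w.without m n := by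
  obtain ⟨AN, AN', BN, BN', xN, xN', yN', yN, ⟨⟨δA, hTA⟩, hAle, hAge⟩, ⟨⟨δB, hTB⟩, hBle, hBge⟩, hz⟩ := hN
  obtain ⟨A, A', x, x', δ, hT, hA, hA'⟩ := w.decomp M n
  obtain ⟨B, B', y', y, δ', hT', hB, hB'⟩ := w.decomp M (m - 1)
  refine ⟨A, A', B, B', x, x', y', y, ⟨⟨δ, hT⟩, hA, hA'⟩, ⟨⟨δ', hT'⟩, hB, hB'⟩, ?_⟩
  have h1 : (x ≫ a) ≫ xN' = 0 := w.orth n A AN' hA hAge _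
  obtain ⟨u, hu⟩ := Triangle.coyoneda_exact₂ _ hTA (x ≫ a) h1
  have h2 : yN' ≫ (b ≫ y) = 0 := w.orth (m - 1) BN B' hBle (by simpa using hB') _
  obtain ⟨v, hv⟩ := Triangle.yoneda_exact₂ _ hTB (b ≫ y) h2
  have hxy : xN ≫ yN = 0 := by simpa using hz
  have : x ≫ y = (x ≫ a) ≫ (b ≫ y) := by
    rw [Category.assoc, ← Category.assoc a, hab, Category.id_comp]
  change A ⟶ AN at u
  change BN' ⟶ B' at v
  dsimp only [Triangle.mk] at hu hv
  rw [Category.id_comp, this, hu, hv]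
  dsimp only [Triangle.mk] at *
  rw [Category.assoc, ← Category.assoc xN, hxy, zero_comp, comp_zero]
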